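/- Let A be a finite idempotent algebra, a,b ∈ A, B = Sg{a,b}, and θ a congruence of B with a^θ ≠ b^θ. Let g be a ternary term operation of A such that g(x, g(x,y,y), g(x,y,y)) = g(x,y,y) for all x,y ∈ A, and such that for all u,v,w ∈ {a,b} the element g(u,v,w) is θ-congruent to the majority element of (u,v,w) (the element of {a,b} occurring at least twice among u,v,w). Then there exist b′ ∈ b^θ and a ternary term operation g′ of A such that g′(a,b′,b′) = g′(b′,a,b′) = g′(b′,b′,a) = b′. -/
import Mathlib


namespace UA

/-- Terms over a signature `(ι, ar)` with `n` variables. -/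
inductive Term (ι : Type) (ar : ι → ℕ) (n : ℕ) : Type where
  | var : Fin n → Term ι ar n
  | app : (i : ι) → (Fin (ar i) → Term ι ar n) → Term ι ar n

/-- Evaluation of a term in an algebra with operations `ops`. -/
def Term.eval {ι : Type} {ar : ι → ℕ} {A : Type} (ops : ∀ i : ι, (Fin (ar i) → A) → A)
    {n : ℕ} : Term ι ar n → (Fin n → A) → A
  | .var j, x => x j
  | .app i ts, x => ops i fun k => Term.eval ops (ts k) x

variable {ι : Type} {ar : ι → ℕ} {A : Type}

/-- An algebra is idempotent if every basic operation is. -/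
def Idempotent (ops : ∀ i : ι, (Fin (ar i) → A) → A) : Prop :=
  ∀ (i : ι) (x : A), ops i (fun _ => x) = x

/-- A subuniverse: a subset closed under all basic operations. -/
def IsSubuniverse (ops : ∀ i : ι, (Fin (ar i) → A) → A) (S : Set A) : Prop :=
  ∀ (i : ι) (xs : Fin (ar i) → A), (∀ k, xs k ∈ S) → ops i xs ∈ S

/-- The subuniverse generated by `X`. -/
def Sg (ops : ∀ i : ι, (Fin (ar i) → A) → A) (X : Set A) : Set A :=
  ⋂₀ {S | IsSubuniverse ops S ∧ X ⊆ S}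

/-- A tolerance: a reflexive symmetric compatible binary relation. -/
def IsTolerance (ops : ∀ i : ι, (Fin (ar i) → A) → A) (τ : A → A → Prop) : Prop :=
  (∀ x, τ x x) ∧ (∀ x y, τ x y → τ y x) ∧
  ∀ (i : ι) (xs ys : Fin (ar i) → A), (∀ k, τ (xs k) (ys k)) → τ (ops i xs) (ops i ys)

/-- A congruence: a compatible equivalence relation. -/
def IsCongruence (ops : ∀ i : ι, (Fin (ar i) → A) → A) (θ : A → A → Prop) : Prop :=
  Equivalence θ ∧
  ∀ (i : ι) (xs ys : Fin (ar i) → A), (∀ k, θ (xs k) (ys k)) → θ (ops i xs) (ops i ys)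

/-- A congruence of the subalgebra with universe `B`, viewed as a partial
equivalence relation on the big algebra whose domain is exactly `B` and which is
compatible with all operations. -/
def IsCongruenceOn (ops : ∀ i : ι, (Fin (ar i) → A) → A) (B : Set A)
    (θ : A → A → Prop) : Prop :=
  (∀ x y, θ x y → x ∈ B ∧ y ∈ B) ∧
  (∀ x ∈ B, θ x x) ∧
  (∀ x y, θ x y → θ y x) ∧
  (∀ x y z, θ x y → θ y z → θ x z) ∧
  ∀ (i : ι) (xs ys : Fin (ar i) → A), (∀ k, θ (xs k) (ys k)) → θ (ops i xs) (ops i ys)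

/-- `f` is a binary term operation of the algebra. -/
def IsTermOp2 (ops : ∀ i : ι, (Fin (ar i) → A) → A) (f : A → A → A) : Prop :=
  ∃ t : Term ι ar 2, ∀ x y, f x y = t.eval ops ![x, y]

/-- `g` is a ternary term operation of the algebra. -/
def IsTermOp3 (ops : ∀ i : ι, (Fin (ar i) → A) → A) (g : A → A → A → A) : Prop :=
  ∃ t : Term ι ar 3, ∀ x y z, g x y z = t.eval ops ![x, y, z]

/-- Connectivity of `a` and `b` in the hypergraph `H(A)` whose hyperedges are the
nonempty proper subuniverses: a chain of hyperedges with consecutive ones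
intersecting, the first containing `a`, the last containing `b`. -/
def HConnected (ops : ∀ i : ι, (Fin (ar i) → A) → A) (a b : A) : Prop :=
  ∃ L : List (Set A),
    (∀ S ∈ L, IsSubuniverse ops S ∧ S.Nonempty ∧ S ≠ Set.univ) ∧
    L.Chain' (fun S T => (S ∩ T).Nonempty) ∧
    ∃ h : L ≠ [], a ∈ L.head h ∧ b ∈ L.getLast h


/-- The majority element of a triple from a two-element set. -/
def maj {A : Type} (u v w : A) [DecidableEq A] : A :=
  if u = v ∨ u = w then u else v

/-- Substitution of terms into a term. -/
def Term.subst {ι : Type} {ar : ι → ℕ} {m n : ℕ} :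
    Term ι ar m → (Fin m → Term ι ar n) → Term ι ar n
  | .var j, σ => σ j
  | .app i ts, σ => .app i (fun k => (ts k).subst σ)

theorem Term.eval_subst {ι : Type} {ar : ι → ℕ} {A : Type}
    (ops : ∀ i : ι, (Fin (ar i) → A) → A) {m n : ℕ}
    (t : Term ι ar m) (σ : Fin m → Term ι ar n) (x : Fin n → A) :
    (t.subst σ).eval ops x = t.eval ops (fun j => (σ j).eval ops x) := by
  induction t with
  | var j => rfl
  | app i ts ih =>
      simp only [Term.subst, Term.eval]
      congr 1
      funext k
      exact ih k

theorem eval_const {ι : Type} {ar : ι → ℕ} {A : Type}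
    {ops : ∀ i : ι, (Fin (ar i) → A) → A} (hid : Idempotent ops) {n : ℕ}
    (t : Term ι ar n) (x : A) : t.eval ops (fun _ => x) = x := by
  induction t with
  | var j => rfl
  | app i ts ih =>
      simp only [Term.eval]
      have : (fun k => Term.eval ops (ts k) fun _ => x) = (fun _ => x) :=
        funext fun k => ih k
      rw [this]; exact hid i x

theorem eval_mem {ι : Type} {ar : ι → ℕ} {A : Type}
    {ops : ∀ i : ι, (Fin (ar i) → A) → A} {S : Set A}
    (hS : IsSubuniverse ops S) {n : ℕ} (t : Term ι ar n) (x : Fin n → A)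
    (hx : ∀ j, x j ∈ S) : t.eval ops x ∈ S := by
  induction t with
  | var j => exact hx j
  | app i ts ih => exact hS i _ (fun k => ih k)

theorem eval_theta {ι : Type} {ar : ι → ℕ} {A : Type}
    {ops : ∀ i : ι, (Fin (ar i) → A) → A} {B : Set A} {θ : A → A → Prop}
    (hθ : IsCongruenceOn ops B θ) {n : ℕ} (t : Term ι ar n) (x y : Fin n → A)
    (h : ∀ j, θ (x j) (y j)) : θ (t.eval ops x) (t.eval ops y) := by
  induction t with
  | var j => exact h j
  | app i ts ih => exact hθ.2.2.2.2 i _ _ (fun k => ih k)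

theorem sg_isSub {ι : Type} {ar : ι → ℕ} {A : Type}
    (ops : ∀ i : ι, (Fin (ar i) → A) → A) (X : Set A) :
    IsSubuniverse ops (Sg ops X) := by
  intro i xs hxs
  refine Set.mem_sInter.mpr fun S hS => hS.1 i xs fun k => ?_
  exact Set.mem_sInter.mp (hxs k) S hS

theorem subset_sg {ι : Type} {ar : ι → ℕ} {A : Type}
    (ops : ∀ i : ι, (Fin (ar i) → A) → A) (X : Set A) : X ⊆ Sg ops X :=
  fun _ hv => Set.mem_sInter.mpr fun _ hS => hS.2 hv

theorem sg_min {ι : Type} {ar : ι → ℕ} {A : Type}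
    {ops : ∀ i : ι, (Fin (ar i) → A) → A} {X S : Set A}
    (h1 : IsSubuniverse ops S) (h2 : X ⊆ S) : Sg ops X ⊆ S :=
  fun _ hv => Set.mem_sInter.mp hv S ⟨h1, h2⟩

theorem mem_sg_pair {ι : Type} {ar : ι → ℕ} {A : Type}
    {ops : ∀ i : ι, (Fin (ar i) → A) → A} {x y v : A}
    (h : v ∈ Sg ops {x, y}) :
    ∃ τ : Term ι ar 2, τ.eval ops ![x, y] = v := by
  have hsub : IsSubuniverse ops {v | ∃ τ : Term ι ar 2, τ.eval ops ![x, y] = v} := by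
    intro i xs hxs
    choose τs hτs using hxs
    exact ⟨Term.app i τs, by
      simp only [Term.eval]; congr 1; funext k; exact hτs k⟩
  have hpair : ({x, y} : Set A) ⊆ {v | ∃ τ : Term ι ar 2, τ.eval ops ![x, y] = v} := by
    rintro v (rfl | rfl)
    · exact ⟨Term.var 0, by simp [Term.eval]⟩
    · exact ⟨Term.var 1, by simp [Term.eval]⟩
  exact Set.mem_sInter.mp h _ ⟨hsub, hpair⟩

theorem subst2_eval {ι : Type} {ar : ι → ℕ} {A : Type}
    (ops : ∀ i : ι, (Fin (ar i) → A) → A) {n : ℕ}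
    (τ : Term ι ar 2) (s₁ s₂ : Term ι ar n) (x : Fin n → A) :
    (τ.subst ![s₁, s₂]).eval ops x = τ.eval ops ![s₁.eval ops x, s₂.eval ops x] := by
  rw [Term.eval_subst]
  congr 1
  funext j
  fin_cases j <;> simp

theorem vec2_const {A : Type} (x : A) : ![x, x] = (fun _ : Fin 2 => x) := by
  funext j; fin_cases j <;> rfl

theorem stmt_13' {ι : Type} {ar : ι → ℕ} {A : Type} [Fintype A] [Nonempty A]
    [DecidableEq A]
    (ops : ∀ i : ι, (Fin (ar i) → A) → A)
    (hidem : Idempotent ops)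
    (a b : A) (θ : A → A → Prop)
    (hθ : IsCongruenceOn ops (Sg ops ({a, b} : Set A)) θ)
    (hneq : ¬ θ a b)
    (g : A → A → A → A) (hg : IsTermOp3 ops g)
    (hmaj : ∀ u v w : A, u ∈ ({a, b} : Set A) → v ∈ ({a, b} : Set A) →
      w ∈ ({a, b} : Set A) → θ (g u v w) (maj u v w)) :
    ∃ b', θ b b' ∧ ∃ g' : A → A → A → A, IsTermOp3 ops g' ∧
      g' a b' b' = b' ∧ g' b' a b' = b' ∧ g' b' b' a = b' := by
  obtain ⟨Tg, hTg⟩ := hg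
  obtain ⟨hdom, hrefl, hsymm, htrans, hcomp⟩ := hθ
  have hθ' : IsCongruenceOn ops (Sg ops ({a, b} : Set A)) θ :=
    ⟨hdom, hrefl, hsymm, htrans, hcomp⟩
  have haB : a ∈ Sg ops ({a, b} : Set A) := subset_sg ops _ (by simp)
  have hbB : b ∈ Sg ops ({a, b} : Set A) := subset_sg ops _ (by simp)
  have hθaa : θ a a := hrefl a haB
  have hθbb : θ b b := hrefl b hbB
  have hab : a ≠ b := by
    intro h; subst h; exact hneq hθaa
  -- θ-compatibility of g
  have gθ : ∀ {x y z x' y' z' : A}, θ x x' → θ y y' → θ z z' →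
      θ (g x y z) (g x' y' z') := by
    intro x y z x' y' z' h1 h2 h3
    rw [hTg x y z, hTg x' y' z']
    refine eval_theta hθ' Tg _ _ ?_
    intro j; fin_cases j <;> simpa
  -- membership of g-values in subuniverses
  have gS : ∀ {S : Set A}, IsSubuniverse ops S → ∀ {x y z : A},
      x ∈ S → y ∈ S → z ∈ S → g x y z ∈ S := by
    intro S hS x y z h1 h2 h3
    rw [hTg x y z]
    refine eval_mem hS Tg _ ?_
    intro j; fin_cases j <;> simpa
  -- majority facts
  have hm1 : θ (g a b b) b := by
    have := hmaj a b b (by simp) (by simp) (by simp)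
    simpa [maj, hab] using this
  have hm2 : θ (g b a b) b := by
    have := hmaj b a b (by simp) (by simp) (by simp)
    simpa [maj] using this
  have hm3 : θ (g b b a) b := by
    have := hmaj b b a (by simp) (by simp) (by simp)
    simpa [maj] using this
  -- the main induction
  have main : ∀ n : ℕ, ∀ c : A, θ b c → (Sg ops ({a, c} : Set A)).ncard ≤ n →
      ∃ b', θ b b' ∧ ∃ g' : A → A → A → A, IsTermOp3 ops g' ∧
        g' a b' b' = b' ∧ g' b' a b' = b' ∧ g' b' b' a = b' := by
    intro n
    induction n with
    | zero =>
        intro c hc hcard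
        exfalso
        have hpos : 0 < (Sg ops ({a, c} : Set A)).ncard :=
          (Set.ncard_pos (Set.toFinite _)).mpr ⟨a, subset_sg ops _ (by simp)⟩
        omega
    | succ n ih =>
        intro c hc hcard
        have hθcb : θ c b := hsymm _ _ hc
        have hcB : c ∈ Sg ops ({a, b} : Set A) := (hdom b c hc).2
        have hθcc : θ c c := hrefl c hcB
        by_cases hB : ∀ c', θ b c' → c' ∈ Sg ops ({a, c} : Set A) →
            c ∈ Sg ops ({a, c'} : Set A)
        · -- direct construction
          have hEsub : IsSubuniverse ops (Sg ops ({a, c} : Set A)) := sg_isSub ops _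
          have haE : a ∈ Sg ops ({a, c} : Set A) := subset_sg ops _ (by simp)
          have hcE : c ∈ Sg ops ({a, c} : Set A) := subset_sg ops _ (by simp)
          -- class facts for the three mixed values
          have hv1 : θ b (g a c c) :=
            hsymm _ _ (htrans _ _ _ (gθ hθaa hθcb hθcb) hm1)
          have hv2 : θ b (g c a c) :=
            hsymm _ _ (htrans _ _ _ (gθ hθcb hθaa hθcb) hm2)
          have hv3 : θ b (g c c a) :=
            hsymm _ _ (htrans _ _ _ (gθ hθcb hθcb hθaa) hm3)
          have hv1E : g a c c ∈ Sg ops ({a, c} : Set A) := gS hEsub haE hcE hcE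
          have hv2E : g c a c ∈ Sg ops ({a, c} : Set A) := gS hEsub hcE haE hcE
          have hv3E : g c c a ∈ Sg ops ({a, c} : Set A) := gS hEsub hcE hcE haE
          -- first recovery term
          obtain ⟨τ₁, hτ₁⟩ := mem_sg_pair (hB _ hv1 hv1E)
          -- useful abbreviations about τ₁
          have hτ₁idem : ∀ x : A, τ₁.eval ops ![x, x] = x := by
            intro x; rw [vec2_const]; exact eval_const hidem τ₁ x
          have τθ : ∀ (τ : Term ι ar 2) {x y x' y' : A}, θ x x' → θ y y' →
              θ (τ.eval ops ![x, y]) (τ.eval ops ![x', y']) := by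
            intro τ x y x' y' h1 h2
            refine eval_theta hθ' τ _ _ ?_
            intro j; fin_cases j <;> simpa
          have τS : ∀ (τ : Term ι ar 2) {x y : A}, x ∈ Sg ops ({a, c} : Set A) →
              y ∈ Sg ops ({a, c} : Set A) →
              τ.eval ops ![x, y] ∈ Sg ops ({a, c} : Set A) := by
            intro τ x y h1 h2
            refine eval_mem hEsub τ _ ?_
            intro j; fin_cases j <;> simpa
          have τidem : ∀ (τ : Term ι ar 2) (x : A), τ.eval ops ![x, x] = x := by
            intro τ x; rw [vec2_const]; exact eval_const hidem τ x
          -- second element and recovery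
          set s₂ := τ₁.eval ops ![c, g c a c] with hs₂def
          have hs₂C : θ b s₂ := by
            have := τθ τ₁ hc hv2
            rwa [τidem τ₁ b] at this
          have hs₂E : s₂ ∈ Sg ops ({a, c} : Set A) := τS τ₁ hcE hv2E
          obtain ⟨τ₂, hτ₂⟩ := mem_sg_pair (hB _ hs₂C hs₂E)
          -- third element and recovery
          set u₃ := τ₁.eval ops ![c, g c c a] with hu₃def
          have hu₃C : θ b u₃ := by
            have := τθ τ₁ hc hv3
            rwa [τidem τ₁ b] at this
          have hu₃E : u₃ ∈ Sg ops ({a, c} : Set A) := τS τ₁ hcE hv3E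
          set s₃ := τ₂.eval ops ![c, u₃] with hs₃def
          have hs₃C : θ b s₃ := by
            have := τθ τ₂ hc hu₃C
            rwa [τidem τ₂ b] at this
          have hs₃E : s₃ ∈ Sg ops ({a, c} : Set A) := τS τ₂ hcE hu₃E
          obtain ⟨τ₃, hτ₃⟩ := mem_sg_pair (hB _ hs₃C hs₃E)
          -- the final operation
          refine ⟨c, hc, fun x y z =>
            τ₃.eval ops ![z, τ₂.eval ops ![y, τ₁.eval ops ![x, g x y z]]], ?_, ?_, ?_, ?_⟩
          · -- it is a term operation
            refine ⟨τ₃.subst ![Term.var 2,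
              τ₂.subst ![Term.var 1, τ₁.subst ![Term.var 0, Tg]]], ?_⟩
            intro x y z
            rw [subst2_eval, subst2_eval, subst2_eval]
            simp only [Term.eval]
            rw [← hTg x y z]
            congr 2
          · -- g' a c c = c
            show τ₃.eval ops ![c, τ₂.eval ops ![c, τ₁.eval ops ![a, g a c c]]] = c
            rw [hτ₁, τidem τ₂ c, τidem τ₃ c]
          · -- g' c a c = c
            show τ₃.eval ops ![c, τ₂.eval ops ![a, τ₁.eval ops ![c, g c a c]]] = c
            rw [← hs₂def, hτ₂, τidem τ₃ c]
          · -- g' c c a = c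
            show τ₃.eval ops ![a, τ₂.eval ops ![c, τ₁.eval ops ![c, g c c a]]] = c
            rw [← hu₃def, ← hs₃def, hτ₃]
        · -- recurse on a smaller subuniverse
          push_neg at hB
          obtain ⟨c', hc', hmem, hnot⟩ := hB
          have hsubs : Sg ops ({a, c'} : Set A) ⊆ Sg ops ({a, c} : Set A) := by
            refine sg_min (sg_isSub ops _) ?_
            rintro v (rfl | rfl)
            · exact subset_sg ops _ (by simp)
            · exact hmem
          have hss : Sg ops ({a, c'} : Set A) ⊂ Sg ops ({a, c} : Set A) :=
            ⟨hsubs, fun hcon => hnot (hcon (subset_sg ops _ (by simp)))⟩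
          have hlt := Set.ncard_lt_ncard hss (Set.toFinite _)
          exact ih c' hc' (by omega)
  exact main _ b hθbb le_rfl

/-- a majority edge yields a thin majority edge: there are
`b' ∈ b^θ` and a ternary term operation `g'` with
`g'(a,b',b') = g'(b',a,b') = g'(b',b',a) = b'`. -/
theorem stmt_13 {ι : Type} {ar : ι → ℕ} {A : Type} [Fintype A] [Nonempty A]
    [DecidableEq A]
    (ops : ∀ i : ι, (Fin (ar i) → A) → A)
    (hidem : Idempotent ops)
    (a b : A) (θ : A → A → Prop)
    (hθ : IsCongruenceOn ops (Sg ops ({a, b} : Set A)) θ)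
    (hneq : ¬ θ a b)
    (g : A → A → A → A) (hg : IsTermOp3 ops g)
    (hlaw : ∀ x y : A, g x (g x y y) (g x y y) = g x y y)
    (hmaj : ∀ u v w : A, u ∈ ({a, b} : Set A) → v ∈ ({a, b} : Set A) →
      w ∈ ({a, b} : Set A) → θ (g u v w) (maj u v w)) :
    ∃ b', θ b b' ∧ ∃ g' : A → A → A → A, IsTermOp3 ops g' ∧
      g' a b' b' = b' ∧ g' b' a b' = b' ∧ g' b' b' a = b' :=
  stmt_13' ops hidem a b θ hθ hneq g hg hmaj

end UA
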